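/- Let Φ be a trace-preserving positive linear map on operators on a finite-dimensional Hilbert space, let p : ℕ → Matrix → ℝ be defined by p_n(ρ) = Tr(P Φⁿ(ρ)) for a fixed positive semidefinite operator P. Suppose τ is a density operator with Σ_n p_n(τ) = ∞, and ρ is a faithful density operator. Then Σ_n p_n(ρ) = ∞. -/

import Mathlib

open Matrix ComplexOrder

lemma trace_re_nonneg {d : ℕ} {A : Matrix (Fin d) (Fin d) ℂ} (hA : A.PosSemidef) :
    0 ≤ A.trace.re := by
  rw [Matrix.trace, Complex.re_sum]
  apply Finset.sum_nonneg
  intro i _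
  have := hA.re_dotProduct_nonneg (Pi.single i 1)
  simpa [dotProduct, Pi.single_apply, Matrix.mulVec_single] using this

open scoped MatrixOrder in
lemma trace_mul_re_nonneg {d : ℕ} {A B : Matrix (Fin d) (Fin d) ℂ} (hA : A.PosSemidef)
    (hB : B.PosSemidef) : 0 ≤ (A * B).trace.re := by
  have h1 : (A * B).trace = (CFC.sqrt A * B * CFC.sqrt A).trace := by
    conv_lhs => rw [← CFC.sqrt_mul_sqrt_self A hA.nonneg, mul_assoc, Matrix.trace_mul_comm]
  rw [h1]
  have : (CFC.sqrt A * B * CFC.sqrt A).PosSemidef := by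
    have := hB.conjTranspose_mul_mul_same (CFC.sqrt A)
    rwa [(CFC.sqrt_nonneg A).posSemidef.1.eq] at this
  exact trace_re_nonneg this

lemma smul_psd {d : ℕ} {A : Matrix (Fin d) (Fin d) ℂ} (hA : A.PosSemidef) {c : ℝ} (hc : 0 ≤ c) :
    ((c : ℂ) • A).PosSemidef := by
  refine ⟨?_, fun x => ?_⟩
  · rw [Matrix.IsHermitian, Matrix.conjTranspose_smul, hA.1.eq]
    norm_num
  · exact (hA.smul (Complex.zero_le_real.2 hc)).2 x

lemma conj_psd {d : ℕ} {A U : Matrix (Fin d) (Fin d) ℂ} (hA : A.PosSemidef) :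
    (U * A * star U).PosSemidef := by
  have := hA.mul_mul_conjTranspose_same U
  rwa [Matrix.star_eq_conjTranspose]

lemma sub_smul_one_psd {d : ℕ} {A : Matrix (Fin d) (Fin d) ℂ} (hA : A.IsHermitian) {c : ℝ}
    (h : ∀ i, c ≤ hA.eigenvalues i) : (A - (c : ℂ) • 1).PosSemidef := by
  set U := (hA.eigenvectorUnitary : Matrix (Fin d) (Fin d) ℂ) with hUdef
  have hUU : U * star U = 1 := (Matrix.mem_unitaryGroup_iff).mp hA.eigenvectorUnitary.2
  have key : A - (c : ℂ) • 1 =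
      U * (Matrix.diagonal (fun i => ((hA.eigenvalues i - c : ℝ) : ℂ))) * star U := by
    have hd : (Matrix.diagonal (fun i => ((hA.eigenvalues i - c : ℝ) : ℂ))) =
        Matrix.diagonal (RCLike.ofReal ∘ hA.eigenvalues) - (c : ℂ) • 1 := by
      rw [← Matrix.diagonal_one, ← Matrix.diagonal_smul, Matrix.diagonal_sub]
      funext i
      push_cast
      simp
    rw [hd, Matrix.mul_sub, Matrix.sub_mul]
    conv_lhs => rw [hA.spectral_theorem, Unitary.conjStarAlgAut_apply]
    have h1 : U * ((c : ℂ) • 1) * star U = (c : ℂ) • (1 : Matrix (Fin d) (Fin d) ℂ) := by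
      rw [Matrix.mul_smul, Matrix.smul_mul, mul_one, hUU]
    rw [h1]
  rw [key]
  exact conj_psd (Matrix.PosSemidef.diagonal fun i => Complex.zero_le_real.2 (by linarith [h i]))

lemma smul_one_sub_psd {d : ℕ} {A : Matrix (Fin d) (Fin d) ℂ} (hA : A.IsHermitian) {c : ℝ}
    (h : ∀ i, hA.eigenvalues i ≤ c) : ((c : ℂ) • 1 - A).PosSemidef := by
  set U := (hA.eigenvectorUnitary : Matrix (Fin d) (Fin d) ℂ) with hUdef
  have hUU : U * star U = 1 := (Matrix.mem_unitaryGroup_iff).mp hA.eigenvectorUnitary.2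
  have key : (c : ℂ) • 1 - A =
      U * (Matrix.diagonal (fun i => ((c - hA.eigenvalues i : ℝ) : ℂ))) * star U := by
    have hd : (Matrix.diagonal (fun i => ((c - hA.eigenvalues i : ℝ) : ℂ))) =
        (c : ℂ) • 1 - Matrix.diagonal (RCLike.ofReal ∘ hA.eigenvalues) := by
      rw [← Matrix.diagonal_one, ← Matrix.diagonal_smul, Matrix.diagonal_sub]
      funext i
      push_cast
      simp
    rw [hd, Matrix.mul_sub, Matrix.sub_mul]
    conv_lhs => rw [hA.spectral_theorem, Unitary.conjStarAlgAut_apply]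
    have h1 : U * ((c : ℂ) • 1) * star U = (c : ℂ) • (1 : Matrix (Fin d) (Fin d) ℂ) := by
      rw [Matrix.mul_smul, Matrix.smul_mul, mul_one, hUU]
    rw [h1]
  rw [key]
  exact conj_psd (Matrix.PosSemidef.diagonal fun i => Complex.zero_le_real.2 (by linarith [h i]))

theorem stmt_2 {d : ℕ} (Φ : Matrix (Fin d) (Fin d) ℂ →ₗ[ℂ] Matrix (Fin d) (Fin d) ℂ)
    (hΦtr : ∀ ρ, (Φ ρ).trace = ρ.trace)
    (hΦpos : ∀ ρ, ρ.PosSemidef → (Φ ρ).PosSemidef)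
    (P : Matrix (Fin d) (Fin d) ℂ) (hP : P.PosSemidef)
    (p : ℕ → Matrix (Fin d) (Fin d) ℂ → ℝ)
    (hp : ∀ n ρ, p n ρ = ((P * ((⇑Φ)^[n] ρ)).trace).re)
    (τ : Matrix (Fin d) (Fin d) ℂ) (hτ : τ.PosSemidef) (hτtr : τ.trace = 1)
    (hτdiv : ¬ Summable (fun n => p n τ))
    (ρ : Matrix (Fin d) (Fin d) ℂ) (hρ : ρ.PosDef) (hρtr : ρ.trace = 1) :
    ¬ Summable (fun n => p n ρ) := by
  -- d is positive
  have hd : 0 < d := by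
    rcases Nat.eq_zero_or_pos d with h | h
    · subst h; simp [Matrix.trace] at hτtr
    · exact h
  haveI : Nonempty (Fin d) := ⟨⟨0, hd⟩⟩
  -- smallest eigenvalue of ρ
  set μ : ℝ := Finset.univ.inf' Finset.univ_nonempty hρ.1.eigenvalues with hμdef
  have hμpos : 0 < μ := by
    rw [hμdef, Finset.lt_inf'_iff]
    intro i _
    exact hρ.eigenvalues_pos i
  -- eigenvalues of τ sum to 1
  have hτsum : ∑ i, hτ.1.eigenvalues i = 1 := by
    have h1 : τ.trace = ∑ i, ((hτ.1.eigenvalues i : ℝ) : ℂ) := by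
      conv_lhs => rw [hτ.1.spectral_theorem]
      rw [Unitary.conjStarAlgAut_apply, Matrix.trace_mul_cycle,
        (Matrix.mem_unitaryGroup_iff').mp hτ.1.eigenvectorUnitary.2, one_mul,
        Matrix.trace_diagonal]
      rfl
    have := congrArg Complex.re (h1.symm.trans hτtr)
    simpa [Complex.re_sum] using this
  have hτle : ∀ i, hτ.1.eigenvalues i ≤ 1 := by
    intro i
    rw [← hτsum]
    exact Finset.single_le_sum (fun j _ => hτ.eigenvalues_nonneg j) (Finset.mem_univ i)
  -- σ = ρ - μ τ is PSD
  have hσ1 : (ρ - (μ : ℂ) • 1).PosSemidef :=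
    sub_smul_one_psd hρ.1 (fun i => Finset.inf'_le _ (Finset.mem_univ i))
  have hσ2 : ((μ : ℂ) • ((1 : Matrix (Fin d) (Fin d) ℂ) - τ)).PosSemidef := by
    apply smul_psd _ hμpos.le
    have := smul_one_sub_psd hτ.1 (c := 1) hτle
    simpa using this
  have hσ : (ρ - (μ : ℂ) • τ).PosSemidef := by
    have key : ρ - (μ : ℂ) • τ = (ρ - (μ : ℂ) • 1) + (μ : ℂ) • (1 - τ) := by
      rw [smul_sub]; abel
    rw [key]
    exact hσ1.add hσ2
  set σ : Matrix (Fin d) (Fin d) ℂ := ρ - (μ : ℂ) • τ with hσdef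
  -- iterates
  have hiter : ∀ n, (⇑Φ)^[n] ρ = (⇑Φ)^[n] σ + (μ : ℂ) • (⇑Φ)^[n] τ := by
    intro n
    induction n with
    | zero => simp [hσdef]
    | succ n ih => rw [Function.iterate_succ_apply', ih, map_add, _root_.map_smul,
        Function.iterate_succ_apply', Function.iterate_succ_apply']
  have hiterpsd : ∀ (X : Matrix (Fin d) (Fin d) ℂ), X.PosSemidef → ∀ n,
      ((⇑Φ)^[n] X).PosSemidef := by
    intro X hX n
    induction n with
    | zero => simpa using hX
    | succ n ih => rw [Function.iterate_succ_apply']; exact hΦpos _ ih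
  -- key inequality : μ * p n τ ≤ p n ρ, and 0 ≤ p n τ
  have hpτ : ∀ n, 0 ≤ p n τ := fun n => by
    rw [hp]; exact trace_mul_re_nonneg hP (hiterpsd τ hτ n)
  have hkey : ∀ n, μ * p n τ ≤ p n ρ := by
    intro n
    have h0 : 0 ≤ ((P * ((⇑Φ)^[n] σ)).trace).re :=
      trace_mul_re_nonneg hP (hiterpsd σ hσ n)
    have hexp : p n ρ = ((P * ((⇑Φ)^[n] σ)).trace).re + μ * p n τ := by
      rw [hp, hp, hiter n, mul_add, Matrix.mul_smul, Matrix.trace_add, Matrix.trace_smul,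
        Complex.add_re, smul_eq_mul]
      simp [Complex.mul_re]
    rw [hexp]
    linarith
  -- conclude
  intro hsum
  apply hτdiv
  have h2 : Summable (fun n => μ * p n τ) := by
    apply Summable.of_nonneg_of_le (fun n => mul_nonneg hμpos.le (hpτ n)) hkey hsum
  have h3 := h2.mul_left μ⁻¹
  simpa [← mul_assoc, inv_mul_cancel₀ hμpos.ne'] using h3
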